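/- arXiv:1905.12999 — 4 statements merged into one kernel-verified Lean document; each statement's English description precedes it below -/
import Mathlib

section
/- Let n = 2r be even, let 1 ≤ q ≤ n/2, and let α : {1,…,k} → I_n be a function such that every block of ker α has even size. Then Ψ_α = Ψ_{α(1)}⋯Ψ_{α(k)} equals either I or −I, where I is the 2^r × 2^r identity matrix. -/
open Matrix

/-- The three Pauli matrices. -/
def pauli1 : Matrix (Fin 2) (Fin 2) ℂ := !![0, 1; 1, 0]
def pauli2 : Matrix (Fin 2) (Fin 2) ℂ := !![0, -Complex.I; Complex.I, 0]
def pauli3 : Matrix (Fin 2) (Fin 2) ℂ := !![1, 0; 0, -1]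

/-- The Majorana fermion `ψ_j` (0-based index `j : Fin (2*r)`), realized as an `r`-fold
Kronecker product of Pauli matrices, acting on `(Fin r → Fin 2)`-indexed space of size `2^r`.
For `j < r` it is `σ₃^{⊗ j} ⊗ σ₁ ⊗ 1^{⊗ (r-j-1)}`, for `j = r + j'` it is
`σ₃^{⊗ j'} ⊗ σ₂ ⊗ 1^{⊗ (r-j'-1)}`. -/
def majorana (r : ℕ) (j : Fin (2 * r)) :
    Matrix (Fin r → Fin 2) (Fin r → Fin 2) ℂ := fun x y =>
  ∏ i : Fin r,
    (if (i : ℕ) < (j : ℕ) % r then pauli3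
     else if (i : ℕ) = (j : ℕ) % r then (if (j : ℕ) < r then pauli1 else pauli2)
     else (1 : Matrix (Fin 2) (Fin 2) ℂ)) (x i) (y i)

/-- The index set `I_n`: subsets of `{0,…,n-1}` of size `q`, i.e. strictly increasing
`q`-tuples with entries in `{1,…,n}`. -/
abbrev MajIdx (n q : ℕ) := {s : Finset (Fin n) // s.card = q}

/-- `Ψ_R = i^{⌊q/2⌋} ψ_{i_1} ⋯ ψ_{i_q}` where `R = {i_1 < ⋯ < i_q}`. -/
noncomputable def PsiOp (r q : ℕ) (R : MajIdx (2 * r) q) :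
    Matrix (Fin r → Fin 2) (Fin r → Fin 2) ℂ :=
  Complex.I ^ (q / 2) • ((R.1.sort (· ≤ ·)).map (majorana r)).prod

/-- The normalized trace `tr = 2^{-r} Tr`. -/
noncomputable def ntr {r : ℕ} (A : Matrix (Fin r → Fin 2) (Fin r → Fin 2) ℂ) : ℂ :=
  ((2 : ℂ) ^ r)⁻¹ * A.trace

/-- `Ψ_α = Ψ_{α(1)} ⋯ Ψ_{α(k)}`. -/
noncomputable def PsiProd (r q : ℕ) {k : ℕ} (α : Fin k → MajIdx (2 * r) q) :
    Matrix (Fin r → Fin 2) (Fin r → Fin 2) ℂ :=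
  ((List.finRange k).map (fun x => PsiOp r q (α x))).prod

/-- A pair partition of `{1,…,k}`, encoded as a fixed-point-free involution: the blocks
are the pairs `{x, f x}`. -/
def IsPairing {k : ℕ} (f : Fin k → Fin k) : Prop :=
  Function.Involutive f ∧ ∀ x, f x ≠ x

instance {k : ℕ} : DecidablePred (IsPairing (k := k)) := fun f =>
  decidable_of_iff ((∀ x, f (f x) = x) ∧ ∀ x, f x ≠ x) Iff.rfl

/-- The set of crossings of a pair partition encoded by the involution `f`: each crossing
pair of blocks `{v₁ < v₂}, {w₁ < w₂}` with `v₁ < w₁ < v₂ < w₂` is recorded once, as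
`(v₁, w₁)`. -/
def crossPairs {k : ℕ} (f : Fin k → Fin k) : Finset (Fin k × Fin k) :=
  Finset.univ.filter fun p => p.1 < p.2 ∧ p.2 < f p.1 ∧ f p.1 < f p.2

/-- The number of crossings `cr(π)` of a pair partition. -/
def crN {k : ℕ} (f : Fin k → Fin k) : ℕ := (crossPairs f).card

/-- The partition (as a setoid, i.e. an equivalence relation) generated by the
pairs `{x, f x}`; for a fixed-point-free involution `f` this is the associated
pair partition. -/
def genSetoid {k : ℕ} (f : Fin k → Fin k) : Setoid (Fin k) :=
  sInf {s : Setoid (Fin k) | ∀ x, s (f x) x}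

/-! ### Auxiliary lemmas -/

section Aux

lemma p1sq : pauli1 * pauli1 = 1 := by
  ext i j; fin_cases i <;> fin_cases j <;>
    simp [pauli1, Matrix.mul_apply, Fin.sum_univ_two, Matrix.one_apply]
lemma p2sq : pauli2 * pauli2 = 1 := by
  ext i j; fin_cases i <;> fin_cases j <;>
    simp [pauli2, Matrix.mul_apply, Fin.sum_univ_two, Matrix.one_apply]
lemma p3sq : pauli3 * pauli3 = 1 := by
  ext i j; fin_cases i <;> fin_cases j <;>
    simp [pauli3, Matrix.mul_apply, Fin.sum_univ_two, Matrix.one_apply]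
lemma a12 : pauli1 * pauli2 = (-1 : ℂ) • (pauli2 * pauli1) := by
  ext i j; fin_cases i <;> fin_cases j <;>
    simp [pauli1, pauli2, Matrix.mul_apply, Fin.sum_univ_two]
lemma a13 : pauli1 * pauli3 = (-1 : ℂ) • (pauli3 * pauli1) := by
  ext i j; fin_cases i <;> fin_cases j <;>
    simp [pauli1, pauli3, Matrix.mul_apply, Fin.sum_univ_two]
lemma a23 : pauli2 * pauli3 = (-1 : ℂ) • (pauli3 * pauli2) := by
  ext i j; fin_cases i <;> fin_cases j <;>
    simp [pauli2, pauli3, Matrix.mul_apply, Fin.sum_univ_two]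

variable {r : ℕ}

def kron (r : ℕ) (A : Fin r → Matrix (Fin 2) (Fin 2) ℂ) :
    Matrix (Fin r → Fin 2) (Fin r → Fin 2) ℂ := fun x y => ∏ i, A i (x i) (y i)

lemma kron_mul (A B : Fin r → Matrix (Fin 2) (Fin 2) ℂ) :
    kron r A * kron r B = kron r (fun i => A i * B i) := by
  ext x y
  simp only [kron, Matrix.mul_apply, ← Finset.prod_mul_distrib]
  exact (Fintype.prod_sum (fun i c => A i (x i) c * B i c (y i))).symm

lemma kron_one : kron r (fun _ => 1) = 1 := by
  ext x y
  simp only [kron, Matrix.one_apply]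
  rw [Finset.prod_boole]
  simp [funext_iff]

lemma kron_smul_congr {A B : Fin r → Matrix (Fin 2) (Fin 2) ℂ} {s : Fin r → ℂ}
    (h : ∀ i, A i = s i • B i) :
    kron r A = (∏ i, s i) • kron r B := by
  ext x y
  simp [kron, h, Finset.prod_mul_distrib]

def majFactor (r : ℕ) (j : Fin (2 * r)) (i : Fin r) : Matrix (Fin 2) (Fin 2) ℂ :=
  if (i : ℕ) < (j : ℕ) % r then pauli3
  else if (i : ℕ) = (j : ℕ) % r then (if (j : ℕ) < r then pauli1 else pauli2)
  else 1

lemma majorana_eq_kron (j : Fin (2 * r)) : majorana r j = kron r (majFactor r j) := rfl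

lemma majFactor_sq (j : Fin (2 * r)) (i : Fin r) :
    majFactor r j i * majFactor r j i = 1 := by
  unfold majFactor
  split_ifs <;> simp [p1sq, p2sq, p3sq]

lemma maj_sq (j : Fin (2 * r)) : majorana r j * majorana r j = 1 := by
  rw [majorana_eq_kron, kron_mul]
  rw [show (fun i => majFactor r j i * majFactor r j i)
      = (fun _ => (1 : Matrix (Fin 2) (Fin 2) ℂ)) from funext (majFactor_sq j), kron_one]

set_option linter.unreachableTactic false in
set_option linter.unusedTactic false in
lemma majFactor_anti {j1 j2 : Fin (2 * r)} (h : j1 ≠ j2) (i : Fin r) :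
    majFactor r j1 i * majFactor r j2 i =
      (if (i : ℕ) = min ((j1 : ℕ) % r) ((j2 : ℕ) % r) then (-1 : ℂ) else 1) •
        (majFactor r j2 i * majFactor r j1 i) := by
  have hr : 0 < r := by have := j1.isLt; omega
  have h1 : (j1 : ℕ) % r < r := Nat.mod_lt _ hr
  have h2 : (j2 : ℕ) % r < r := Nat.mod_lt _ hr
  have hkey : (j1 : ℕ) % r = (j2 : ℕ) % r → ((j1 : ℕ) < r ↔ ¬ (j2 : ℕ) < r) := by
    intro he
    have l1 := j1.isLt; have l2 := j2.isLt
    have hne : (j1 : ℕ) ≠ (j2 : ℕ) := fun hc => h (Fin.ext hc)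
    constructor
    · intro hj1 hj2
      rw [Nat.mod_eq_of_lt hj1, Nat.mod_eq_of_lt hj2] at he; exact hne he
    · intro hj2
      by_contra hj1
      push_neg at hj1
      rw [Nat.mod_eq_sub_mod hj1, Nat.mod_eq_of_lt (by omega)] at he
      by_cases hj2' : (j2 : ℕ) < r
      · rw [Nat.mod_eq_of_lt hj2'] at he; exact hj2 hj2'
      · push_neg at hj2'
        rw [Nat.mod_eq_sub_mod hj2', Nat.mod_eq_of_lt (by omega)] at he
        omega
  unfold majFactor
  rcases Nat.lt_trichotomy ((j1 : ℕ) % r) ((j2 : ℕ) % r) with hlt | heq | hgt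
  · split_ifs <;> first
      | (exfalso; omega)
      | simp [a13, a23, mul_one, one_mul]
      | simp
  · have hiff := hkey heq
    split_ifs <;> first
      | (exfalso; omega)
      | (exfalso; tauto)
      | simp [a12, a13, a23, heq]
      | simp [heq]
      | (rw [a12]; simp)
      | (rw [show pauli2 * pauli1 = (-1 : ℂ) • (pauli1 * pauli2) by rw [a12]; simp]; simp)
  · split_ifs <;> first
      | (exfalso; omega)
      | simp [a13, a23]
      | (rw [show pauli3 * pauli1 = (-1 : ℂ) • (pauli1 * pauli3) by rw [a13]; simp]; simp)
      | (rw [show pauli3 * pauli2 = (-1 : ℂ) • (pauli2 * pauli3) by rw [a23]; simp]; simp)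
      | simp

lemma maj_anti {j1 j2 : Fin (2 * r)} (h : j1 ≠ j2) :
    majorana r j1 * majorana r j2 = (-1 : ℂ) • (majorana r j2 * majorana r j1) := by
  have hr : 0 < r := by have := j1.isLt; omega
  have hmin : min ((j1 : ℕ) % r) ((j2 : ℕ) % r) < r :=
    lt_of_le_of_lt (min_le_left _ _) (Nat.mod_lt _ hr)
  rw [majorana_eq_kron, majorana_eq_kron, kron_mul, kron_mul]
  rw [kron_smul_congr (majFactor_anti h)]
  congr 1
  have : (fun i : Fin r =>
      if (i : ℕ) = min ((j1 : ℕ) % r) ((j2 : ℕ) % r) then (-1 : ℂ) else 1)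
      = fun i : Fin r => if i = (⟨_, hmin⟩ : Fin r) then (-1 : ℂ) else 1 := by
    funext i
    simp [Fin.ext_iff]
  rw [this, Finset.prod_ite_eq' Finset.univ (⟨_, hmin⟩ : Fin r) (fun _ => (-1 : ℂ))]
  simp

lemma maj_pull (a : Fin (2 * r)) :
    ∀ L : List (Fin (2 * r)), a ∈ L →
    ∃ m : ℕ, majorana r a * (L.map (majorana r)).prod =
      ((-1 : ℂ)) ^ m • ((L.erase a).map (majorana r)).prod := by
  intro L
  induction L with
  | nil => intro h; simp at h
  | cons b T ih =>
    intro hmem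
    by_cases hab : a = b
    · subst hab
      refine ⟨0, ?_⟩
      simp [List.erase_cons_head, ← mul_assoc, maj_sq]
    · have haT : a ∈ T := by
        rcases List.mem_cons.mp hmem with h | h
        · exact absurd h hab
        · exact h
      obtain ⟨m, hm⟩ := ih haT
      refine ⟨m + 1, ?_⟩
      have herase : (b :: T).erase a = b :: T.erase a :=
        List.erase_cons_tail (by simp [Ne.symm hab])
      rw [herase]
      simp only [List.map_cons, List.prod_cons, ← mul_assoc]
      rw [maj_anti hab, smul_mul_assoc, mul_assoc, hm]
      rw [mul_smul_comm, smul_smul, pow_succ]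
      ring_nf

lemma maj_even_prod :
    ∀ (n : ℕ) (L : List (Fin (2 * r))), L.length ≤ n → (∀ a, Even (L.count a)) →
    (L.map (majorana r)).prod = 1 ∨ (L.map (majorana r)).prod = -1 := by
  intro n
  induction n with
  | zero =>
    intro L hL _
    have : L = [] := List.length_eq_zero_iff.mp (Nat.le_zero.mp hL)
    subst this; left; simp
  | succ n ih =>
    intro L hL hcount
    cases L with
    | nil => left; simp
    | cons a T =>
      have hcT : Odd (T.count a) := by
        have h := hcount a
        simp only [List.count_cons_self] at h
        rcases h with ⟨t, ht⟩
        exact ⟨t - 1, by omega⟩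
      have haT : a ∈ T := by
        rw [← List.count_pos_iff]
        rcases hcT with ⟨t, ht⟩; omega
      obtain ⟨m, hm⟩ := maj_pull a T haT
      have hcount' : ∀ b, Even ((T.erase a).count b) := by
        intro b
        rw [List.count_erase]
        by_cases hba : b = a
        · subst hba
          simp only [beq_self_eq_true, if_true]
          rcases hcT with ⟨t, ht⟩
          exact ⟨t - 0, by omega⟩
        · simp only [show (a == b) = false by simpa using Ne.symm hba, if_false, Nat.sub_zero]
          have := hcount b
          rw [List.count_cons_of_ne (Ne.symm hba)] at this
          rw [if_neg (by decide), Nat.sub_zero]; exact this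
      have hlen : (T.erase a).length ≤ n := by
        have := List.length_erase_of_mem haT
        simp at hL
        omega
      rcases ih (T.erase a) hlen hcount' with h1 | h1 <;>
      · simp only [List.map_cons, List.prod_cons, hm, h1]
        rcases neg_one_pow_eq_or ℂ m with h2 | h2 <;> rw [h2] <;> simp

lemma smul_list_prod {ι : Type*} (c : ℂ)
    (f : ι → Matrix (Fin r → Fin 2) (Fin r → Fin 2) ℂ) :
    ∀ L : List ι, (L.map fun x => c • f x).prod = c ^ L.length • (L.map f).prod := by
  intro L
  induction L with
  | nil => simp
  | cons a T ih =>
    simp only [List.map_cons, List.prod_cons, List.length_cons, ih]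
    rw [smul_mul_assoc, mul_smul_comm, smul_smul, pow_succ]
    ring_nf

end Aux

/-- if every block of `ker α` (i.e. every nonempty fiber of `α`) has even
size, then `Ψ_α = Ψ_{α(1)} ⋯ Ψ_{α(k)}` is `I` or `−I`. -/
theorem PsiProd_even_fibers (r q : ℕ) (hq1 : 1 ≤ q) (hq2 : q ≤ r) {k : ℕ}
    (α : Fin k → MajIdx (2 * r) q)
    (hα : ∀ R : MajIdx (2 * r) q, Even ((Finset.univ.filter fun x => α x = R).card)) :
    PsiProd r q α = 1 ∨ PsiProd r q α = -1 := by
  classical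
  set c : ℂ := Complex.I ^ (q / 2) with hc
  set BigL : List (Fin (2 * r)) :=
    ((List.finRange k).map (fun x => (α x).1.sort (· ≤ ·))).flatten with hBigL
  -- Step 1: PsiProd = c^k • (big product of majoranas)
  have h1 : PsiProd r q α = c ^ k • (BigL.map (majorana r)).prod := by
    unfold PsiProd PsiOp
    rw [smul_list_prod c (fun x => (((α x).1.sort (· ≤ ·)).map (majorana r)).prod)
      (List.finRange k)]
    rw [List.length_finRange]
    congr 1
    rw [hBigL, List.map_flatten, List.prod_flatten, List.map_map, List.map_map]
    rfl
  -- Step 2: every index appears an even number of times in BigL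
  have hcount : ∀ a : Fin (2 * r), Even (BigL.count a) := by
    intro a
    have hcnt : BigL.count a
        = ((List.finRange k).map fun x => if a ∈ (α x).1 then 1 else 0).sum := by
      rw [hBigL, List.count_flatten, List.map_map]
      congr 1
      refine List.map_congr_left (fun x _ => ?_)
      simp only [Function.comp_apply]
      by_cases hmem : a ∈ (α x).1
      · rw [if_pos hmem]
        exact List.count_eq_one_of_mem (Finset.sort_nodup _ _)
          ((Finset.mem_sort _).mpr hmem)
      · rw [if_neg hmem]
        exact List.count_eq_zero_of_not_mem (fun hc => hmem ((Finset.mem_sort _).mp hc))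
    rw [hcnt, ← Fin.sum_univ_def, ← Finset.card_filter]
    -- now show the filter card is even, by summing over fibers of α
    have hsplit : (Finset.univ.filter fun x => a ∈ (α x).1).card
        = ∑ R : MajIdx (2 * r) q,
            ((Finset.univ.filter fun x => a ∈ (α x).1).filter fun x => α x = R).card :=
      Finset.card_eq_sum_card_fiberwise (fun x _ => Finset.mem_univ (α x))
    rw [hsplit]
    refine Finset.even_sum _ (fun R _ => ?_)
    rw [Finset.filter_filter]
    by_cases hR : a ∈ R.1
    · have hset : (Finset.univ.filter fun x => a ∈ (α x).1 ∧ α x = R)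
          = Finset.univ.filter fun x => α x = R := by
        refine Finset.filter_congr (fun x _ => ?_)
        constructor
        · rintro ⟨-, h⟩; exact h
        · intro h; exact ⟨h ▸ hR, h⟩
      rw [hset]; exact hα R
    · have hset : (Finset.univ.filter fun x => a ∈ (α x).1 ∧ α x = R) = ∅ := by
        refine Finset.filter_false_of_mem (fun x _ => ?_)
        rintro ⟨ha, hxR⟩
        exact hR (hxR ▸ ha)
      rw [hset]
      simp
  -- Step 3: k is even
  have hk : Even k := by
    have hsplit : (Finset.univ : Finset (Fin k)).card
        = ∑ R : MajIdx (2 * r) q, (Finset.univ.filter fun x => α x = R).card :=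
      Finset.card_eq_sum_card_fiberwise (fun x _ => Finset.mem_univ (α x))
    rw [Finset.card_univ, Fintype.card_fin] at hsplit
    rw [hsplit]
    exact Finset.even_sum _ (fun R _ => hα R)
  -- Step 4: c^k is 1 or -1
  have hck : c ^ k = 1 ∨ c ^ k = -1 := by
    obtain ⟨t, ht⟩ := hk
    have : c ^ k = ((-1 : ℂ)) ^ ((q / 2) * t) := by
      rw [hc, ht]
      rw [← pow_mul]
      rw [show q / 2 * (t + t) = 2 * (q / 2 * t) by ring]
      rw [pow_mul, Complex.I_sq]
    rw [this]
    exact neg_one_pow_eq_or ℂ _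
  -- Step 5: conclude
  rcases maj_even_prod BigL.length BigL le_rfl hcount with h2 | h2 <;>
    rcases hck with h3 | h3 <;>
      rw [h1, h2, h3] <;> simp
end

section
/- Let 1 ≤ q ≤ n/2 with n even, let k be even, and let α : {1,…,k} → I_n. If π, σ ∈ P_2(k) are two pair partitions with π ≤ ker α and σ ≤ ker α, then (−1)^{q·cr(π) + Σ_{{V,W} crossing blocks of π} |α(V) ∩ α(W)|} = (−1)^{q·cr(σ) + Σ_{{V,W} crossing blocks of σ} |α(V) ∩ α(W)|}; that is, the sign in the trace formula does not depend on the choice of the pair partition below ker α. -/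
open Matrix

namespace SignAux

open Finset

variable {k n q : ℕ}



lemma zmod_card_zero (s : Finset (Fin k)) (h : Fin k → Fin k)
    (hmem : ∀ x ∈ s, h x ∈ s) (hinv : ∀ x ∈ s, h (h x) = x) (hne : ∀ x ∈ s, h x ≠ x) :
    ((s.card : ZMod 2)) = 0 := by
  have h0 : ∑ _x ∈ s, (1 : ZMod 2) = 0 :=
    Finset.sum_involution (fun a ha => h a) (fun a ha => by decide)
      (fun a ha _ => hne a ha) (fun a ha => hmem a ha) (fun a ha => hinv a ha)
  simpa using h0

lemma card_split (s : Finset (Fin k)) (P Q : Fin k → Prop) [DecidablePred P] [DecidablePred Q] :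
    (s.filter P).card
      = (s.filter fun x => P x ∧ Q x).card + (s.filter fun x => P x ∧ ¬ Q x).card := by
  rw [← Finset.filter_filter, ← Finset.filter_filter,
    Finset.card_filter_add_card_filter_not]

lemma cfc {p q : Fin k → Prop} [DecidablePred p] [DecidablePred q] (s : Finset (Fin k))
    (h : ∀ x ∈ s, p x ↔ q x) : (s.filter p).card = (s.filter q).card :=
  congrArg Finset.card (Finset.filter_congr (by simpa using h))

lemma key_lt (s : Finset (Fin k)) (h : Fin k → Fin k)
    (hmem : ∀ x ∈ s, h x ∈ s) (hinv : ∀ x ∈ s, h (h x) = x) (hne : ∀ x ∈ s, h x ≠ x)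
    (y t : Fin k) (hy : y ∉ s) (ht : t ∉ s) (hyt : y < t) :
    (((s.filter fun x => x < t ∧ y < h x).card : ZMod 2)
        + ((s.filter fun x => x < y ∧ t < h x).card : ZMod 2))
      = ((s.filter (· < t)).card : ZMod 2) + ((s.filter (· < y)).card : ZMod 2) := by
  have hxny : ∀ x ∈ s, x ≠ y := fun x hx => by rintro rfl; exact hy hx
  have hhny : ∀ x ∈ s, h x ≠ y := fun x hx => hxny _ (hmem x hx)
  have hhnt : ∀ x ∈ s, h x ≠ t := fun x hx => by
    have := hmem x hx; rintro rfl; exact ht this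
  -- F1 : nt = e1 + a
  have F1 : ((s.filter (· < t)).card : ℕ)
      = (s.filter fun x => x < t ∧ h x < t).card
        + (s.filter fun x => x < t ∧ t < h x).card := by
    rw [card_split s (· < t) (fun x => h x < t)]
    congr 1
    exact cfc s fun x hx => and_congr_right fun _ =>
      ⟨fun h' => lt_of_le_of_ne (not_lt.mp h') (Ne.symm (hhnt x hx)),
       fun h' => not_lt.mpr h'.le⟩
  -- F2 : c1 = d + a
  have F2 : ((s.filter fun x => x < t ∧ y < h x).card : ℕ)
      = (s.filter fun x => (x < t ∧ y < h x) ∧ h x < t).card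
        + (s.filter fun x => x < t ∧ t < h x).card := by
    rw [card_split s (fun x => x < t ∧ y < h x) (fun x => h x < t)]
    congr 1
    refine cfc s fun x hx => ⟨fun ⟨⟨h1, _⟩, h3⟩ =>
      ⟨h1, lt_of_le_of_ne (not_lt.mp h3) (Ne.symm (hhnt x hx))⟩,
      fun ⟨h1, h3⟩ => ⟨⟨h1, hyt.trans h3⟩, not_lt.mpr h3.le⟩⟩
  -- F3 : d = d1 + e3
  have F3 : ((s.filter fun x => (x < t ∧ y < h x) ∧ h x < t).card : ℕ)
      = (s.filter fun x => x < y ∧ y < h x ∧ h x < t).card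
        + (s.filter fun x => ((x < t ∧ y < h x) ∧ h x < t) ∧ y < x).card := by
    rw [card_split s (fun x => (x < t ∧ y < h x) ∧ h x < t) (fun x => x < y)]
    congr 1
    · refine cfc s fun x hx => ⟨fun ⟨⟨⟨_, h2⟩, h3⟩, h4⟩ => ⟨h4, h2, h3⟩,
        fun ⟨h1, h2, h3⟩ => ⟨⟨⟨h1.trans hyt, h2⟩, h3⟩, h1⟩⟩
    · refine cfc s fun x hx => and_congr_right fun _ =>
        ⟨fun h' => lt_of_le_of_ne (not_lt.mp h') (Ne.symm (hxny x hx)),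
         fun h' => not_lt.mpr h'.le⟩
  -- F4 : ny = e2 + b
  have F4 : ((s.filter (· < y)).card : ℕ)
      = (s.filter fun x => x < y ∧ h x < y).card
        + (s.filter fun x => x < y ∧ y < h x).card := by
    rw [card_split s (· < y) (fun x => h x < y)]
    congr 1
    exact cfc s fun x hx => and_congr_right fun _ =>
      ⟨fun h' => lt_of_le_of_ne (not_lt.mp h') (Ne.symm (hhny x hx)),
       fun h' => not_lt.mpr h'.le⟩
  -- F5 : b = d1 + c2
  have F5 : ((s.filter fun x => x < y ∧ y < h x).card : ℕ)
      = (s.filter fun x => x < y ∧ y < h x ∧ h x < t).card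
        + (s.filter fun x => x < y ∧ t < h x).card := by
    rw [card_split s (fun x => x < y ∧ y < h x) (fun x => h x < t)]
    congr 1
    · exact cfc s fun x hx => ⟨fun ⟨⟨h1, h2⟩, h3⟩ => ⟨h1, h2, h3⟩,
        fun ⟨h1, h2, h3⟩ => ⟨⟨h1, h2⟩, h3⟩⟩
    · refine cfc s fun x hx => ⟨fun ⟨⟨h1, _⟩, h3⟩ =>
        ⟨h1, lt_of_le_of_ne (not_lt.mp h3) (Ne.symm (hhnt x hx))⟩,
        fun ⟨h1, h3⟩ => ⟨⟨h1, hyt.trans h3⟩, not_lt.mpr h3.le⟩⟩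
  -- evenness
  have E1 : (((s.filter fun x => x < t ∧ h x < t).card : ℕ) : ZMod 2) = 0 := by
    refine zmod_card_zero _ h (fun x hx => ?_) (fun x hx => ?_) (fun x hx => ?_) <;>
      simp only [mem_filter] at hx
    · exact mem_filter.mpr ⟨hmem x hx.1, hx.2.2, by rw [hinv x hx.1]; exact hx.2.1⟩
    · exact hinv x hx.1
    · exact hne x hx.1
  have E2 : (((s.filter fun x => x < y ∧ h x < y).card : ℕ) : ZMod 2) = 0 := by
    refine zmod_card_zero _ h (fun x hx => ?_) (fun x hx => ?_) (fun x hx => ?_) <;>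
      simp only [mem_filter] at hx
    · exact mem_filter.mpr ⟨hmem x hx.1, hx.2.2, by rw [hinv x hx.1]; exact hx.2.1⟩
    · exact hinv x hx.1
    · exact hne x hx.1
  have E3 : (((s.filter fun x => ((x < t ∧ y < h x) ∧ h x < t) ∧ y < x).card : ℕ) : ZMod 2)
      = 0 := by
    refine zmod_card_zero _ h (fun x hx => ?_) (fun x hx => ?_) (fun x hx => ?_) <;>
      simp only [mem_filter] at hx
    · refine mem_filter.mpr ⟨hmem x hx.1, ⟨⟨hx.2.1.2, ?_⟩, ?_⟩, hx.2.1.1.2⟩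
      · rw [hinv x hx.1]; exact hx.2.2
      · rw [hinv x hx.1]; exact hx.2.1.1.1
    · exact hinv x hx.1
    · exact hne x hx.1
  -- combine
  have C1 := congrArg (Nat.cast : ℕ → ZMod 2) F1
  have C2 := congrArg (Nat.cast : ℕ → ZMod 2) F2
  have C3 := congrArg (Nat.cast : ℕ → ZMod 2) F3
  have C4 := congrArg (Nat.cast : ℕ → ZMod 2) F4
  have C5 := congrArg (Nat.cast : ℕ → ZMod 2) F5
  push_cast at C1 C2 C3 C4 C5
  rw [C2, C3, C4, C5, E3]
  have haa : (((s.filter fun x => x < t ∧ t < h x).card : ℕ) : ZMod 2)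
      = ((s.filter (· < t)).card : ZMod 2) := by
    have := congrArg (Nat.cast : ℕ → ZMod 2) F1
    push_cast at this
    rw [this, E1, zero_add]
  rw [haa, E2]
  ring

def w (α : Fin k → MajIdx n q) (x y : Fin k) : ZMod 2 :=
  ((q + ((α x).1 ∩ (α y).1).card : ℕ) : ZMod 2)

lemma w_symm (α : Fin k → MajIdx n q) (x y : Fin k) : w α x y = w α y x := by
  unfold w; rw [Finset.inter_comm]

lemma w_same (α : Fin k → MajIdx n q) {x y : Fin k} (h : α x = α y) : w α x y = 0 := by
  unfold w
  rw [h, Finset.inter_self, (α y).2]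
  push_cast
  exact CharTwo.add_self_eq_zero _

lemma w_congr (α : Fin k → MajIdx n q) {x x' y y' : Fin k} (hx : α x' = α x)
    (hy : α y' = α y) : w α x' y' = w α x y := by
  unfold w; rw [hx, hy]

def Pset (f : Fin k → Fin k) : Finset (Fin k × Fin k) :=
  Finset.univ.filter fun p => p.1 < p.2 ∧ p.2 < f p.1 ∧ p.1 < f p.2

lemma pset_decomp (α : Fin k → MajIdx n q) (h : Fin k → Fin k) (s : Finset (Fin k))
    (a₀ : Fin k) (hconst : ∀ x ∈ s, α x = α a₀) :
    ∑ p ∈ Pset h, w α p.1 p.2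
      = ∑ p ∈ Finset.univ.filter
          (fun p : Fin k × Fin k =>
            (p.1 < p.2 ∧ p.2 < h p.1 ∧ p.1 < h p.2) ∧ p.1 ∉ s ∧ p.2 ∉ s),
          w α p.1 p.2
        + ∑ y ∈ Finset.univ.filter (· ∉ s),
            ((s.filter fun x => x < h y ∧ y < h x).card : ZMod 2) * w α a₀ y := by
  classical
  -- split Pset into 4 parts by membership of the two coordinates in s
  have e0 : Pset h
      = (Finset.univ.filter (fun p : Fin k × Fin k =>
            (p.1 < p.2 ∧ p.2 < h p.1 ∧ p.1 < h p.2) ∧ p.1 ∈ s ∧ p.2 ∈ s))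
        ∪ (Finset.univ.filter (fun p : Fin k × Fin k =>
            (p.1 < p.2 ∧ p.2 < h p.1 ∧ p.1 < h p.2) ∧ ¬(p.1 ∈ s ∧ p.2 ∈ s))) := by
    unfold Pset
    rw [← Finset.filter_or]
    apply Finset.filter_congr
    intro p _
    tauto
  have hdisj : Disjoint
      (Finset.univ.filter (fun p : Fin k × Fin k =>
          (p.1 < p.2 ∧ p.2 < h p.1 ∧ p.1 < h p.2) ∧ p.1 ∈ s ∧ p.2 ∈ s))
      (Finset.univ.filter (fun p : Fin k × Fin k =>
          (p.1 < p.2 ∧ p.2 < h p.1 ∧ p.1 < h p.2) ∧ ¬(p.1 ∈ s ∧ p.2 ∈ s))) := by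
    rw [Finset.disjoint_left]
    intro p hp hq
    simp only [Finset.mem_filter] at hp hq
    tauto
  rw [e0, Finset.sum_union hdisj]
  have hA : ∑ p ∈ Finset.univ.filter (fun p : Fin k × Fin k =>
      (p.1 < p.2 ∧ p.2 < h p.1 ∧ p.1 < h p.2) ∧ p.1 ∈ s ∧ p.2 ∈ s), w α p.1 p.2 = 0 := by
    refine Finset.sum_eq_zero fun p hp => ?_
    simp only [Finset.mem_filter] at hp
    exact w_same α ((hconst _ hp.2.2.1).trans (hconst _ hp.2.2.2).symm)
  rw [hA, zero_add]
  -- split the rest into D, B, C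
  have e1 : (Finset.univ.filter (fun p : Fin k × Fin k =>
        (p.1 < p.2 ∧ p.2 < h p.1 ∧ p.1 < h p.2) ∧ ¬(p.1 ∈ s ∧ p.2 ∈ s)))
      = (Finset.univ.filter (fun p : Fin k × Fin k =>
            (p.1 < p.2 ∧ p.2 < h p.1 ∧ p.1 < h p.2) ∧ p.1 ∉ s ∧ p.2 ∉ s))
        ∪ ((Finset.univ.filter (fun p : Fin k × Fin k =>
            (p.1 < p.2 ∧ p.2 < h p.1 ∧ p.1 < h p.2) ∧ p.1 ∈ s ∧ p.2 ∉ s))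
          ∪ (Finset.univ.filter (fun p : Fin k × Fin k =>
            (p.1 < p.2 ∧ p.2 < h p.1 ∧ p.1 < h p.2) ∧ p.1 ∉ s ∧ p.2 ∈ s))) := by
    rw [← Finset.filter_or, ← Finset.filter_or]
    apply Finset.filter_congr
    intro p _
    by_cases h1 : p.1 ∈ s <;> by_cases h2 : p.2 ∈ s <;> tauto
  have hd1 : Disjoint
      (Finset.univ.filter (fun p : Fin k × Fin k =>
          (p.1 < p.2 ∧ p.2 < h p.1 ∧ p.1 < h p.2) ∧ p.1 ∈ s ∧ p.2 ∉ s))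
      (Finset.univ.filter (fun p : Fin k × Fin k =>
          (p.1 < p.2 ∧ p.2 < h p.1 ∧ p.1 < h p.2) ∧ p.1 ∉ s ∧ p.2 ∈ s)) := by
    rw [Finset.disjoint_left]
    intro p hp hq
    simp only [Finset.mem_filter] at hp hq
    tauto
  have hd2 : Disjoint
      (Finset.univ.filter (fun p : Fin k × Fin k =>
          (p.1 < p.2 ∧ p.2 < h p.1 ∧ p.1 < h p.2) ∧ p.1 ∉ s ∧ p.2 ∉ s))
      ((Finset.univ.filter (fun p : Fin k × Fin k =>
          (p.1 < p.2 ∧ p.2 < h p.1 ∧ p.1 < h p.2) ∧ p.1 ∈ s ∧ p.2 ∉ s))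
        ∪ (Finset.univ.filter (fun p : Fin k × Fin k =>
          (p.1 < p.2 ∧ p.2 < h p.1 ∧ p.1 < h p.2) ∧ p.1 ∉ s ∧ p.2 ∈ s))) := by
    rw [Finset.disjoint_union_right]
    constructor
    · rw [Finset.disjoint_left]
      intro p hp hq
      simp only [Finset.mem_filter] at hp hq
      tauto
    · rw [Finset.disjoint_left]
      intro p hp hq
      simp only [Finset.mem_filter] at hp hq
      tauto
  rw [e1, Finset.sum_union hd2, Finset.sum_union hd1]
  congr 1
  -- now: B + C = iterated sum
  -- C reindexed by swap
  have hC : ∑ p ∈ Finset.univ.filter (fun p : Fin k × Fin k =>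
        (p.1 < p.2 ∧ p.2 < h p.1 ∧ p.1 < h p.2) ∧ p.1 ∉ s ∧ p.2 ∈ s), w α p.1 p.2
      = ∑ p ∈ Finset.univ.filter (fun p : Fin k × Fin k =>
          (p.2 < p.1 ∧ p.1 < h p.2 ∧ p.2 < h p.1) ∧ p.1 ∈ s ∧ p.2 ∉ s), w α p.1 p.2 := by
    refine Finset.sum_bij' (fun p _ => p.swap) (fun p _ => p.swap) ?_ ?_ ?_ ?_ ?_
    · intro p hp
      simp only [Finset.mem_filter, Finset.mem_univ, true_and, Prod.fst_swap,
        Prod.snd_swap] at hp ⊢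
      tauto
    · intro p hp
      simp only [Finset.mem_filter, Finset.mem_univ, true_and, Prod.fst_swap,
        Prod.snd_swap] at hp ⊢
      tauto
    · intro p _; simp
    · intro p _; simp
    · intro p _
      exact w_symm α p.1 p.2
  rw [hC]
  -- combine B + C' into T
  have hBC : ∑ p ∈ Finset.univ.filter (fun p : Fin k × Fin k =>
        (p.1 < p.2 ∧ p.2 < h p.1 ∧ p.1 < h p.2) ∧ p.1 ∈ s ∧ p.2 ∉ s), w α p.1 p.2
      + ∑ p ∈ Finset.univ.filter (fun p : Fin k × Fin k =>
          (p.2 < p.1 ∧ p.1 < h p.2 ∧ p.2 < h p.1) ∧ p.1 ∈ s ∧ p.2 ∉ s), w α p.1 p.2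
      = ∑ p ∈ Finset.univ.filter (fun p : Fin k × Fin k =>
          (p.1 ∈ s ∧ p.2 ∉ s) ∧ p.1 < h p.2 ∧ p.2 < h p.1), w α p.1 p.2 := by
    rw [← Finset.sum_filter_add_sum_filter_not
      (Finset.univ.filter (fun p : Fin k × Fin k =>
        (p.1 ∈ s ∧ p.2 ∉ s) ∧ p.1 < h p.2 ∧ p.2 < h p.1)) (fun p => p.1 < p.2)]
    congr 1
    · apply Finset.sum_congr _ (fun _ _ => rfl)
      rw [Finset.filter_filter]
      apply Finset.filter_congr
      intro p _
      constructor
      · rintro ⟨⟨h1, h2, h3⟩, h4, h5⟩; exact ⟨⟨⟨h4, h5⟩, h3, h2⟩, h1⟩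
      · rintro ⟨⟨⟨h4, h5⟩, h3, h2⟩, h1⟩; exact ⟨⟨h1, h2, h3⟩, h4, h5⟩
    · apply Finset.sum_congr _ (fun _ _ => rfl)
      rw [Finset.filter_filter]
      apply Finset.filter_congr
      intro p _
      constructor
      · rintro ⟨⟨h1, h2, h3⟩, h4, h5⟩; exact ⟨⟨⟨h4, h5⟩, h2, h3⟩, not_lt.mpr h1.le⟩
      · rintro ⟨⟨⟨h4, h5⟩, h2, h3⟩, h1⟩
        have hne : p.2 ≠ p.1 := fun hc => h5 (hc ▸ h4)
        exact ⟨⟨lt_of_le_of_ne (not_lt.mp h1) hne, h2, h3⟩, h4, h5⟩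
  rw [hBC]
  -- T as iterated sum
  rw [Finset.sum_finset_product_right _ (Finset.univ.filter (· ∉ s))
    (fun y => s.filter (fun x => x < h y ∧ y < h x)) ?_]
  · refine Finset.sum_congr rfl fun y hy => ?_
    have hw : ∀ x ∈ s.filter (fun x => x < h y ∧ y < h x), w α x y = w α a₀ y := by
      intro x hx
      simp only [Finset.mem_filter] at hx
      exact w_congr α (hconst _ hx.1) rfl
    rw [Finset.sum_congr rfl hw, Finset.sum_const, nsmul_eq_mul]
  · intro p
    simp only [Finset.mem_filter, Finset.mem_univ, true_and]
    tauto

-- symmetric key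

lemma key (s : Finset (Fin k)) (h : Fin k → Fin k)
    (hmem : ∀ x ∈ s, h x ∈ s) (hinv : ∀ x ∈ s, h (h x) = x) (hne : ∀ x ∈ s, h x ≠ x)
    (y t : Fin k) (hy : y ∉ s) (ht : t ∉ s) (hyt : y ≠ t) :
    (((s.filter fun x => x < t ∧ y < h x).card : ZMod 2)
        + ((s.filter fun x => x < y ∧ t < h x).card : ZMod 2))
      = ((s.filter (· < t)).card : ZMod 2) + ((s.filter (· < y)).card : ZMod 2) := by
  rcases lt_or_gt_of_ne hyt with hlt | hgt
  · exact key_lt s h hmem hinv hne y t hy ht hlt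
  · rw [add_comm, add_comm ((s.filter (· < t)).card : ZMod 2)]
    exact key_lt s h hmem hinv hne t y ht hy hgt

lemma swap_eq (α : Fin k → MajIdx n q) (f f' : Fin k → Fin k) (s : Finset (Fin k)) (a₀ : Fin k)
    (hf1 : Function.Involutive f) (hf2 : ∀ x, f x ≠ x)
    (hf'1 : Function.Involutive f') (hf'2 : ∀ x, f' x ≠ x)
    (hfs : ∀ x ∈ s, f x ∈ s) (hf's : ∀ x ∈ s, f' x ∈ s)
    (hoff : ∀ x ∉ s, f' x = f x)
    (hconst : ∀ x ∈ s, α x = α a₀)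
    (hαf : ∀ x, α (f x) = α x) :
    ∑ p ∈ Pset f, w α p.1 p.2 = ∑ p ∈ Pset f', w α p.1 p.2 := by
  classical
  have hout : ∀ x, x ∉ s → f x ∉ s := by
    intro x hx hc
    exact hx (by simpa [hf1 x] using hfs _ hc)
  rw [pset_decomp α f s a₀ hconst, pset_decomp α f' s a₀ hconst]
  have hDeq : ∑ p ∈ Finset.univ.filter
        (fun p : Fin k × Fin k =>
          (p.1 < p.2 ∧ p.2 < f p.1 ∧ p.1 < f p.2) ∧ p.1 ∉ s ∧ p.2 ∉ s), w α p.1 p.2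
      = ∑ p ∈ Finset.univ.filter
        (fun p : Fin k × Fin k =>
          (p.1 < p.2 ∧ p.2 < f' p.1 ∧ p.1 < f' p.2) ∧ p.1 ∉ s ∧ p.2 ∉ s), w α p.1 p.2 := by
    apply Finset.sum_congr _ (fun _ _ => rfl)
    apply Finset.filter_congr
    intro p _
    constructor
    · rintro ⟨⟨h1, h2, h3⟩, h4, h5⟩
      exact ⟨⟨h1, by rwa [hoff _ h4], by rwa [hoff _ h5]⟩, h4, h5⟩
    · rintro ⟨⟨h1, h2, h3⟩, h4, h5⟩
      exact ⟨⟨h1, by rwa [hoff _ h4] at h2, by rwa [hoff _ h5] at h3⟩, h4, h5⟩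
  rw [hDeq]
  congr 1
  -- the second sums: replace h y by f y in the f' sum for y ∉ s
  have hcongr : ∀ y ∈ Finset.univ.filter (· ∉ s),
      ((s.filter fun x => x < f' y ∧ y < f' x).card : ZMod 2) * w α a₀ y
        = ((s.filter fun x => x < f y ∧ y < f' x).card : ZMod 2) * w α a₀ y := by
    intro y hy
    simp only [Finset.mem_filter, Finset.mem_univ, true_and] at hy
    rw [show (s.filter fun x => x < f' y ∧ y < f' x)
        = (s.filter fun x => x < f y ∧ y < f' x) from
      Finset.filter_congr fun x hx => by rw [hoff _ hy]]
  rw [Finset.sum_congr rfl hcongr]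
  -- now show the difference sums to zero via the involution y ↦ f y
  have key2 : ∀ y ∈ Finset.univ.filter (· ∉ s),
      (((s.filter fun x => x < f y ∧ y < f x).card : ZMod 2) * w α a₀ y
        + ((s.filter fun x => x < f y ∧ y < f' x).card : ZMod 2) * w α a₀ y)
      + (((s.filter fun x => x < f (f y) ∧ f y < f x).card : ZMod 2) * w α a₀ (f y)
        + ((s.filter fun x => x < f (f y) ∧ f y < f' x).card : ZMod 2) * w α a₀ (f y))
      = 0 := by
    intro y hy
    simp only [Finset.mem_filter, Finset.mem_univ, true_and] at hy
    have hwy : w α a₀ (f y) = w α a₀ y := w_congr α rfl (hαf y)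
    rw [hwy, hf1 y]
    have hk1 := key s f hfs (fun x _ => hf1 x) (fun x _ => hf2 x) y (f y) hy
      (hout y hy) (Ne.symm (hf2 y))
    have hk2 := key s f' hf's (fun x _ => hf'1 x) (fun x _ => hf'2 x) y (f y) hy
      (hout y hy) (Ne.symm (hf2 y))
    have hzero : (((s.filter fun x => x < f y ∧ y < f x).card : ZMod 2)
          + ((s.filter fun x => x < y ∧ f y < f x).card : ZMod 2))
        + (((s.filter fun x => x < f y ∧ y < f' x).card : ZMod 2)
          + ((s.filter fun x => x < y ∧ f y < f' x).card : ZMod 2)) = 0 := by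
      rw [hk1, hk2]
      exact CharTwo.add_self_eq_zero _
    calc ((s.filter fun x => x < f y ∧ y < f x).card : ZMod 2) * w α a₀ y
          + ((s.filter fun x => x < f y ∧ y < f' x).card : ZMod 2) * w α a₀ y
        + (((s.filter fun x => x < y ∧ f y < f x).card : ZMod 2) * w α a₀ y
          + ((s.filter fun x => x < y ∧ f y < f' x).card : ZMod 2) * w α a₀ y)
        = ((((s.filter fun x => x < f y ∧ y < f x).card : ZMod 2)
            + ((s.filter fun x => x < y ∧ f y < f x).card : ZMod 2))
          + (((s.filter fun x => x < f y ∧ y < f' x).card : ZMod 2)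
            + ((s.filter fun x => x < y ∧ f y < f' x).card : ZMod 2))) * w α a₀ y := by
          ring
      _ = 0 := by rw [hzero, zero_mul]
  -- sum of (G_f + G_f') over y ∉ s is zero
  have hsum0 : ∑ y ∈ Finset.univ.filter (· ∉ s),
      (((s.filter fun x => x < f y ∧ y < f x).card : ZMod 2) * w α a₀ y
        + ((s.filter fun x => x < f y ∧ y < f' x).card : ZMod 2) * w α a₀ y) = 0 := by
    refine Finset.sum_involution (fun y _ => f y) ?_ ?_ ?_ ?_
    · intro y hy
      have h2 := key2 y hy
      simp only [Finset.mem_filter, Finset.mem_univ, true_and] at hy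
      convert h2 using 2
    · intro y _ _
      exact hf2 y
    · intro y hy
      simp only [Finset.mem_filter, Finset.mem_univ, true_and] at hy ⊢
      exact hout y hy
    · intro y _
      exact hf1 y
  rw [Finset.sum_add_distrib] at hsum0
  have := CharTwo.add_eq_iff_eq_add.mp hsum0
  rw [this, zero_add]

lemma main_ind (α : Fin k → MajIdx n q) (g : Fin k → Fin k)
    (hg1 : Function.Involutive g) (hg2 : ∀ x, g x ≠ x) (hαg : ∀ x, α (g x) = α x) :
    ∀ N : ℕ, ∀ f : Fin k → Fin k, Function.Involutive f → (∀ x, f x ≠ x) →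
      (∀ x, α (f x) = α x) →
      (Finset.univ.filter fun x => f x ≠ g x).card ≤ N →
      ∑ p ∈ Pset f, w α p.1 p.2 = ∑ p ∈ Pset g, w α p.1 p.2 := by
  intro N
  induction N with
  | zero =>
    intro f _ _ _ hcard
    have : f = g := by
      funext x
      by_contra hx
      have : x ∈ Finset.univ.filter fun x => f x ≠ g x := by
        simp [hx]
      have := Finset.card_pos.mpr ⟨x, this⟩
      omega
    rw [this]
  | succ N ih =>
    intro f hf1 hf2 hαf hcard
    by_cases hall : ∀ x, f x = g x
    · rw [funext hall]
    · push_neg at hall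
      obtain ⟨a, ha⟩ := hall
      set b := g a with hb
      have hba : b ≠ a := hg2 a
      have hfa_ne_b : f a ≠ b := ha
      have hfb_ne_a : f b ≠ a := fun h => hfa_ne_b (by rw [← h, hf1 b])
      have hfa_ne_fb : f a ≠ f b := fun h => hba (hf1.injective h).symm
      have hαb : α b = α a := hαg a
      set s : Finset (Fin k) := {a, b, f a, f b} with hs
      have hmem : ∀ x, x ∈ s ↔ x = a ∨ x = b ∨ x = f a ∨ x = f b := by
        intro x; simp [hs]
      set f' : Fin k → Fin k := fun x =>
        if x = a then b else if x = b then a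
        else if x = f a then f b else if x = f b then f a else f x with hf'
      have ea : f' a = b := by simp [hf']
      have eb : f' b = a := by simp [hf', hba]
      have efa : f' (f a) = f b := by
        simp [hf', hf2 a, hfa_ne_b]
      have efb : f' (f b) = f a := by
        simp [hf', hfb_ne_a, hf2 b, Ne.symm hfa_ne_fb]
      have eoff : ∀ x ∉ s, f' x = f x := by
        intro x hx
        rw [hmem] at hx
        push_neg at hx
        simp [hf', hx.1, hx.2.1, hx.2.2.1, hx.2.2.2]
      have hf'1 : Function.Involutive f' := by
        intro x
        rcases (em (x = a)) with rfl | h1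
        · rw [ea, eb]
        rcases (em (x = b)) with rfl | h2
        · rw [eb, ea]
        rcases (em (x = f a)) with rfl | h3
        · rw [efa, efb]
        rcases (em (x = f b)) with rfl | h4
        · rw [efb, efa]
        have hxs : x ∉ s := by rw [hmem]; tauto
        rw [eoff x hxs]
        have hfxs : f x ∉ s := by
          rw [hmem]
          push_neg
          refine ⟨?_, ?_, ?_, ?_⟩
          · intro hc; exact h3 (by rw [← hc, hf1 x])
          · intro hc; exact h4 (by rw [← hc, hf1 x])
          · intro hc; exact h1 (hf1.injective hc)
          · intro hc; exact h2 (hf1.injective hc)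
        rw [eoff _ hfxs, hf1 x]
      have hf'2 : ∀ x, f' x ≠ x := by
        intro x
        rcases (em (x = a)) with rfl | h1
        · rw [ea]; exact hba
        rcases (em (x = b)) with rfl | h2
        · rw [eb]; exact Ne.symm hba
        rcases (em (x = f a)) with rfl | h3
        · rw [efa]; exact Ne.symm hfa_ne_fb
        rcases (em (x = f b)) with rfl | h4
        · rw [efb]; exact hfa_ne_fb
        have hxs : x ∉ s := by rw [hmem]; tauto
        rw [eoff x hxs]; exact hf2 x
      have hαf' : ∀ x, α (f' x) = α x := by
        intro x
        rcases (em (x = a)) with rfl | h1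
        · rw [ea, hαb]
        rcases (em (x = b)) with rfl | h2
        · rw [eb, hαb]
        rcases (em (x = f a)) with rfl | h3
        · rw [efa, hαf b, hαb, ← hαf a]
        rcases (em (x = f b)) with rfl | h4
        · rw [efb, hαf a, ← hαb, ← hαf b]
        have hxs : x ∉ s := by rw [hmem]; tauto
        rw [eoff x hxs]; exact hαf x
      have hfs : ∀ x ∈ s, f x ∈ s := by
        intro x hx
        rw [hmem] at hx ⊢
        rcases hx with rfl | rfl | rfl | rfl
        · tauto
        · tauto
        · rw [hf1 a]; tauto
        · rw [hf1 b]; tauto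
      have hf's : ∀ x ∈ s, f' x ∈ s := by
        intro x hx
        rw [hmem] at hx ⊢
        rcases hx with rfl | rfl | rfl | rfl
        · rw [ea]; tauto
        · rw [eb]; tauto
        · rw [efa]; tauto
        · rw [efb]; tauto
      have hconst : ∀ x ∈ s, α x = α a := by
        intro x hx
        rw [hmem] at hx
        rcases hx with rfl | rfl | rfl | rfl
        · rfl
        · exact hαb
        · exact hαf a
        · rw [hαf b]; exact hαb
      -- cardinality decrease
      have hsub : (Finset.univ.filter fun x => f' x ≠ g x)
          ⊆ (Finset.univ.filter fun x => f x ≠ g x).erase a := by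
        intro x hx
        simp only [Finset.mem_filter, Finset.mem_univ, true_and, Finset.mem_erase] at hx ⊢
        constructor
        · rintro rfl
          exact hx (by rw [ea])
        · intro hfx
          apply hx
          rcases (em (x = a)) with rfl | h1
          · exact absurd hfx ha
          rcases (em (x = b)) with rfl | h2
          · exact absurd (by rw [hfx, hb, hg1 a]) hfb_ne_a
          rcases (em (x = f a)) with rfl | h3
          · exfalso
            have h5 : g (f a) = a := by rw [← hfx, hf1 a]
            have h6 : f a = b := by
              calc f a = g (g (f a)) := (hg1 (f a)).symm
                _ = g a := by rw [h5]
                _ = b := hb.symm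
            exact hfa_ne_b h6
          rcases (em (x = f b)) with rfl | h4
          · exfalso
            have h5 : g (f b) = b := by rw [← hfx, hf1 b]
            have h6 : f b = a := by
              calc f b = g (g (f b)) := (hg1 (f b)).symm
                _ = g b := by rw [h5]
                _ = g (g a) := by rw [hb]
                _ = a := hg1 a
            exact hfb_ne_a h6
          have hxs : x ∉ s := by rw [hmem]; tauto
          rw [eoff x hxs]; exact hfx
      have hamem : a ∈ Finset.univ.filter fun x => f x ≠ g x := by
        simp only [Finset.mem_filter, Finset.mem_univ, true_and]; exact ha
      have hcard' : (Finset.univ.filter fun x => f' x ≠ g x).card ≤ N := by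
        have h1 := Finset.card_le_card hsub
        rw [Finset.card_erase_of_mem hamem] at h1
        omega
      calc ∑ p ∈ Pset f, w α p.1 p.2
          = ∑ p ∈ Pset f', w α p.1 p.2 :=
            swap_eq α f f' s a hf1 hf2 hf'1 hf'2 hfs hf's eoff hconst hαf
        _ = ∑ p ∈ Pset g, w α p.1 p.2 := ih f' hf'1 hf'2 hαf' hcard'


lemma lemA (f : Fin k → Fin k) (hf1 : Function.Involutive f) (hf2 : ∀ x, f x ≠ x)
    (α : Fin k → MajIdx n q) (hαf : ∀ x, α (f x) = α x) :
    ∑ p ∈ crossPairs f, w α p.1 p.2 = ∑ p ∈ Pset f, w α p.1 p.2 := by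
  have hsplit := Finset.sum_filter_add_sum_filter_not (Pset f)
    (fun p => f p.1 < f p.2) (fun p => w α p.1 p.2)
  have h1 : (Pset f).filter (fun p => f p.1 < f p.2) = crossPairs f := by
    unfold Pset crossPairs
    rw [Finset.filter_filter]
    apply Finset.filter_congr
    intro p _
    constructor
    · rintro ⟨⟨h1, h2, h3⟩, h4⟩; exact ⟨h1, h2, h4⟩
    · rintro ⟨h1, h2, h4⟩; exact ⟨⟨h1, h2, (h1.trans h2).trans h4⟩, h4⟩
  have h2 : ∑ p ∈ (Pset f).filter (fun p => ¬ f p.1 < f p.2), w α p.1 p.2 = 0 := by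
    refine Finset.sum_involution (fun p _ => (p.1, f p.2)) ?_ ?_ ?_ ?_
    · intro p hp
      have : w α p.1 (f p.2) = w α p.1 p.2 := w_congr α rfl (hαf p.2)
      rw [this]
      exact CharTwo.add_self_eq_zero _
    · intro p hp _
      intro hcon
      have : f p.2 = p.2 := congrArg Prod.snd hcon
      exact hf2 p.2 this
    · intro p hp
      simp only [Pset, Finset.mem_filter, Finset.mem_univ, true_and] at hp ⊢
      obtain ⟨⟨h1, h2, h3⟩, h4⟩ := hp
      have hne : f p.2 ≠ f p.1 := fun hc => absurd (hf1.injective hc) (ne_of_gt h1)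
      have h5 : f p.2 < f p.1 := lt_of_le_of_ne (not_lt.mp h4) hne
      exact ⟨⟨h3, h5, by rw [hf1 p.2]; exact h1⟩, by rw [hf1 p.2]; exact not_lt.mpr h2.le⟩
    · intro p hp
      simp [hf1 p.2]
  rw [← hsplit, h1, h2, add_zero]


lemma neg_one_pow_congr {m m' : ℕ} (h : m % 2 = m' % 2) : (-1 : ℂ) ^ m = (-1 : ℂ) ^ m' := by
  conv_lhs => rw [← Nat.div_add_mod m 2]
  conv_rhs => rw [← Nat.div_add_mod m' 2]
  rw [pow_add, pow_add, pow_mul, pow_mul, neg_one_sq, one_pow, one_pow, h]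

end SignAux

/-- the sign appearing in the trace formula does not depend on the choice
of the pair partition `π ≤ ker α`: for two pair partitions (encoded by fixed-point-free
involutions `f`, `g`) with `π ≤ ker α` and `σ ≤ ker α`, the two signs agree. -/
theorem sign_independent_of_pairing {n q : ℕ} (hn : Even n) (hq1 : 1 ≤ q) (hq2 : 2 * q ≤ n)
    {k : ℕ} (hk : Even k)
    (f g : Fin k → Fin k) (hf : IsPairing f) (hg : IsPairing g)
    (α : Fin k → MajIdx n q) (hαf : ∀ x, α (f x) = α x) (hαg : ∀ x, α (g x) = α x) :
    (-1 : ℂ) ^ (q * crN f + ∑ p ∈ crossPairs f, ((α p.1).1 ∩ (α p.2).1).card)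
      = (-1 : ℂ) ^ (q * crN g + ∑ p ∈ crossPairs g, ((α p.1).1 ∩ (α p.2).1).card) := by
  classical
  have hmain : ∑ p ∈ crossPairs f, SignAux.w α p.1 p.2
      = ∑ p ∈ crossPairs g, SignAux.w α p.1 p.2 := by
    rw [SignAux.lemA f hf.1 hf.2 α hαf, SignAux.lemA g hg.1 hg.2 α hαg]
    exact SignAux.main_ind α g hg.1 hg.2 hαg _ f hf.1 hf.2 hαf le_rfl
  have cast_eq : ∀ f' : Fin k → Fin k,
      ((q * crN f' + ∑ p ∈ crossPairs f', ((α p.1).1 ∩ (α p.2).1).card : ℕ) : ZMod 2)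
        = ∑ p ∈ crossPairs f', SignAux.w α p.1 p.2 := by
    intro f'
    unfold SignAux.w crN
    push_cast
    rw [Finset.sum_add_distrib, Finset.sum_const, nsmul_eq_mul]
    ring
  have hmod : ((q * crN f + ∑ p ∈ crossPairs f, ((α p.1).1 ∩ (α p.2).1).card : ℕ) : ZMod 2)
      = ((q * crN g + ∑ p ∈ crossPairs g, ((α p.1).1 ∩ (α p.2).1).card : ℕ) : ZMod 2) := by
    rw [cast_eq f, cast_eq g, hmain]
  have h2 := (ZMod.natCast_eq_natCast_iff' _ _ 2).mp hmod
  exact SignAux.neg_one_pow_congr h2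
end

section
/- Let k be even and let θ = {T_1,…,T_m} be the partition of {1,…,k} into m consecutive intervals of sizes k_1,…,k_m with k = k_1+⋯+k_m. Let π ∈ P_2(k) satisfy π ∨ θ = 1_k and let π' ∈ P_2(k) satisfy π' ≤ θ. Then |π ∨ π'| ≤ k/2 − m + 1. -/
open Matrix

section AuxSetoid
variable {α : Type*}

/-- The setoid generated by relating `a` and `b`. -/
def pairS (a b : α) : Setoid α := sInf {s : Setoid α | s a b}

lemma pairS_le {a b : α} {s : Setoid α} (h : s a b) : pairS a b ≤ s := sInf_le h

lemma pairS_rel (a b : α) : (pairS a b) a b := Setoid.sInf_iff.mpr fun _ hs => hs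

/-- `s` with classes of `a` and `b` merged. -/
def addPair (s : Setoid α) (a b : α) : Setoid α where
  r x y := s x y ∨ (s x a ∧ s b y) ∨ (s x b ∧ s a y)
  iseqv := by
    constructor
    · exact fun x => Or.inl (s.refl x)
    · rintro x y (h | ⟨h1, h2⟩ | ⟨h1, h2⟩)
      · exact Or.inl (s.symm h)
      · exact Or.inr (Or.inr ⟨s.symm h2, s.symm h1⟩)
      · exact Or.inr (Or.inl ⟨s.symm h2, s.symm h1⟩)
    · rintro x y z (h | ⟨h1, h2⟩ | ⟨h1, h2⟩) (h' | ⟨h1', h2'⟩ | ⟨h1', h2'⟩)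
      · exact Or.inl (s.trans h h')
      · exact Or.inr (Or.inl ⟨s.trans h h1', h2'⟩)
      · exact Or.inr (Or.inr ⟨s.trans h h1', h2'⟩)
      · exact Or.inr (Or.inl ⟨h1, s.trans h2 h'⟩)
      · exact Or.inl (s.trans (s.trans h1 (s.symm (s.trans h2 h1'))) h2')
      · exact Or.inl (s.trans h1 h2')
      · exact Or.inr (Or.inr ⟨h1, s.trans h2 h'⟩)
      · exact Or.inl (s.trans h1 h2')
      · exact Or.inl (s.trans (s.trans h1 (s.symm (s.trans h2 h1'))) h2')

lemma sup_pairS_le (s : Setoid α) (a b : α) : s ⊔ pairS a b ≤ addPair s a b :=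
  sup_le (fun _ _ h => Or.inl h)
    (pairS_le (Or.inr (Or.inl ⟨s.refl a, s.refl b⟩)))

lemma card_quot_le_sup_pairS [Finite α] (s : Setoid α) (a b : α) :
    Nat.card (Quotient s) ≤ Nat.card (Quotient (s ⊔ pairS a b)) + 1 := by
  classical
  set t := s ⊔ pairS a b with ht
  have hle : s ≤ t := le_sup_left
  let φ : Quotient s → Quotient t := Quotient.map id fun x y h => hle h
  let j : Quotient s → Option (Quotient t) :=
    fun q => if q = Quotient.mk s a then none else some (φ q)
  have hj : Function.Injective j := by
    intro q1 q2 h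
    by_cases h1 : q1 = Quotient.mk s a <;> by_cases h2 : q2 = Quotient.mk s a
    · rw [h1, h2]
    · simp [j, h1, h2] at h
    · simp [j, h1, h2] at h
    · simp only [j, if_neg h1, if_neg h2, Option.some.injEq] at h
      obtain ⟨x, rfl⟩ := q1.exists_rep
      obtain ⟨y, rfl⟩ := q2.exists_rep
      have hxy : t x y := Quotient.exact h
      rcases sup_pairS_le s a b hxy with h' | ⟨ha, hb⟩ | ⟨hb, ha⟩
      · exact Quotient.sound h'
      · exact absurd (Quotient.sound ha) h1
      · exact absurd (Quotient.sound (s.symm ha)) h2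
  have hft := Fintype.ofFinite (Quotient t)
  calc Nat.card (Quotient s) ≤ Nat.card (Option (Quotient t)) :=
        Nat.card_le_card_of_injective j hj
    _ = Nat.card (Quotient t) + 1 := by
        have := Fintype.ofFinite (Quotient t)
        simp [Nat.card_eq_fintype_card]

lemma card_quot_le_of_le [Finite α] {s t : Setoid α} (h : s ≤ t) :
    Nat.card (Quotient t) ≤ Nat.card (Quotient s) :=
  Nat.card_le_card_of_surjective (Quotient.map id fun _ _ hxy => h hxy)
    (by intro q; obtain ⟨x, rfl⟩ := q.exists_rep; exact ⟨Quotient.mk s x, rfl⟩)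

lemma card_quot_le_sup_finset [Finite α] {ι : Type*} [DecidableEq ι]
    (s : Setoid α) (p q : ι → α) (F : Finset ι) :
    Nat.card (Quotient s) ≤
      Nat.card (Quotient (s ⊔ F.sup fun i => pairS (p i) (q i))) + F.card := by
  induction F using Finset.induction with
  | empty => simp
  | @insert a F ha ih =>
    have h2 := card_quot_le_sup_pairS (s ⊔ F.sup fun i => pairS (p i) (q i)) (p a) (q a)
    have he : s ⊔ (insert a F).sup (fun i => pairS (p i) (q i)) =
        (s ⊔ F.sup fun i => pairS (p i) (q i)) ⊔ pairS (p a) (q a) := by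
      rw [Finset.sup_insert, sup_comm (pairS (p a) (q a)), ← sup_assoc]
    rw [he, Finset.card_insert_of_notMem ha]
    omega

lemma card_quot_add_card_quot_le [Finite α] (s t u : Setoid α) (hus : u ≤ s) (hut : u ≤ t) :
    Nat.card (Quotient s) + Nat.card (Quotient t) ≤
      Nat.card (Quotient u) + Nat.card (Quotient (s ⊔ t)) := by
  classical
  have hFu : Fintype (Quotient u) := Fintype.ofFinite _
  have hFt : Fintype (Quotient t) := Fintype.ofFinite _
  set τ : Quotient u → α := fun Q => (Quotient.mk t Q.out).out with hτ
  set F : Finset (Quotient u) := Finset.univ.filter (fun Q => ¬ u Q.out (τ Q)) with hF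
  set V : Setoid α := s ⊔ F.sup fun Q => pairS Q.out (τ Q) with hV
  have hsV : s ≤ V := le_sup_left
  have huV : u ≤ V := hus.trans hsV
  have key : ∀ x : α, V x (τ (Quotient.mk u x)) := by
    intro x
    have h1 : u x (Quotient.mk u x).out := u.symm (Quotient.mk_out x)
    have h2 : V (Quotient.mk u x).out (τ (Quotient.mk u x)) := by
      by_cases hm : Quotient.mk u x ∈ F
      · have hp : pairS (Quotient.mk u x).out (τ (Quotient.mk u x)) ≤ V := by
          rw [hV]; exact le_trans (Finset.le_sup (f := fun Q => pairS Q.out (τ Q)) hm) le_sup_right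
        exact hp (pairS_rel _ _)
      · have : u (Quotient.mk u x).out (τ (Quotient.mk u x)) := by
          simpa [hF] using hm
        exact huV this
    exact V.trans (huV h1) h2
  have hmkt : ∀ x : α, Quotient.mk t ((Quotient.mk u x).out) = Quotient.mk t x :=
    fun x => Quotient.sound (hut (Quotient.mk_out x))
  have htV : t ≤ V := by
    rw [Setoid.le_def]
    intro x y hxy
    have heq : τ (Quotient.mk u x) = τ (Quotient.mk u y) := by
      simp only [hτ]
      rw [hmkt x, hmkt y, Quotient.sound hxy]
    exact V.trans (key x) (heq ▸ V.symm (key y))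
  have hstV : s ⊔ t ≤ V := sup_le hsV htV
  have h1 : Nat.card (Quotient V) ≤ Nat.card (Quotient (s ⊔ t)) := card_quot_le_of_le hstV
  have h2 : Nat.card (Quotient s) ≤ Nat.card (Quotient V) + F.card :=
    card_quot_le_sup_finset s _ _ F
  -- bound on F.card
  set ι' : Quotient t → Quotient u := fun R => Quotient.mk u R.out with hι
  have hinj : Function.Injective ι' := by
    intro R R' h
    have h' : t R.out R'.out := hut (Quotient.exact h)
    rw [← Quotient.out_eq R, ← Quotient.out_eq R']
    exact Quotient.sound h'
  have hnotmem : ∀ R : Quotient t, ι' R ∉ F := by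
    intro R
    simp only [hF, Finset.mem_filter, Finset.mem_univ, true_and, not_not]
    have h1' : u (ι' R).out R.out := Quotient.mk_out R.out
    have h2' : Quotient.mk t ((ι' R).out) = R := by
      rw [Quotient.sound (hut h1'), Quotient.out_eq]
    show u (ι' R).out ((Quotient.mk t (ι' R).out).out)
    rw [h2']
    exact h1'
  have hdisj : Disjoint F (Finset.univ.image ι') := by
    rw [Finset.disjoint_right]
    intro Q hQ
    obtain ⟨R, -, rfl⟩ := Finset.mem_image.mp hQ
    exact hnotmem R
  have hcard : F.card + Nat.card (Quotient t) ≤ Nat.card (Quotient u) := by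
    have himg : (Finset.univ.image ι').card = Nat.card (Quotient t) := by
      rw [Finset.card_image_of_injective _ hinj, Finset.card_univ, Nat.card_eq_fintype_card]
    calc F.card + Nat.card (Quotient t) = (F ∪ Finset.univ.image ι').card := by
          rw [Finset.card_union_of_disjoint hdisj, himg]
      _ ≤ (Finset.univ : Finset (Quotient u)).card := Finset.card_le_card (Finset.subset_univ _)
      _ = Nat.card (Quotient u) := by rw [Finset.card_univ, Nat.card_eq_fintype_card]
  omega

end AuxSetoid

section PairingAux

/-- Explicit pair relation of a fixed-point-free involution. -/
def pairRel {k : ℕ} {g : Fin k → Fin k} (hg : Function.Involutive g) : Setoid (Fin k) where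
  r x y := x = y ∨ y = g x
  iseqv := by
    constructor
    · exact fun x => Or.inl rfl
    · rintro x y (rfl | rfl)
      · exact Or.inl rfl
      · exact Or.inr (hg x).symm
    · rintro x y z (rfl | rfl) (rfl | rfl)
      · exact Or.inl rfl
      · exact Or.inr rfl
      · exact Or.inr rfl
      · exact Or.inl (hg x).symm

lemma genSetoid_rel {k : ℕ} {g : Fin k → Fin k} (hg : Function.Involutive g) (x y : Fin k) :
    genSetoid g x y ↔ x = y ∨ y = g x := by
  constructor
  · intro h
    exact Setoid.sInf_iff.mp h (pairRel hg) (fun z => Or.inr (hg z).symm)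
  · rintro (rfl | rfl)
    · exact (genSetoid g).refl x
    · exact (genSetoid g).symm (Setoid.sInf_iff.mpr fun s hs => hs x)

lemma two_mul_card_quot_genSetoid {k : ℕ} {g : Fin k → Fin k} (hg : IsPairing g) :
    Nat.card (Quotient (genSetoid g)) * 2 = k := by
  classical
  have hft : Fintype (Quotient (genSetoid g)) := Fintype.ofFinite _
  have hfib := Finset.card_eq_sum_card_fiberwise
    (f := Quotient.mk (genSetoid g)) (s := (Finset.univ : Finset (Fin k)))
    (t := Finset.univ) (fun x _ => Finset.mem_univ _)
  have hfil : ∀ Q : Quotient (genSetoid g),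
      (Finset.univ.filter fun x => Quotient.mk (genSetoid g) x = Q).card = 2 := by
    intro Q
    have hset : (Finset.univ.filter fun x => Quotient.mk (genSetoid g) x = Q)
        = {Q.out, g Q.out} := by
      ext x
      simp only [Finset.mem_filter, Finset.mem_univ, true_and, Finset.mem_insert,
        Finset.mem_singleton]
      constructor
      · intro h
        have hrel : genSetoid g x Q.out := Quotient.exact (by rw [h, Quotient.out_eq])
        rcases (genSetoid_rel hg.1 _ _).mp hrel with rfl | h'
        · exact Or.inl rfl
        · exact Or.inr (by rw [h', hg.1 x])
      · rintro (rfl | rfl)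
        · exact Quotient.out_eq Q
        · have : genSetoid g (g Q.out) Q.out := (genSetoid_rel hg.1 _ _).mpr (Or.inr (hg.1 Q.out).symm)
          rw [Quotient.sound this, Quotient.out_eq]
    rw [hset, Finset.card_insert_of_notMem (by
      simp only [Finset.mem_singleton]
      exact fun h => hg.2 Q.out h.symm), Finset.card_singleton]
  rw [Finset.card_univ, Fintype.card_fin] at hfib
  have hsum : ∑ Q : Quotient (genSetoid g),
      (Finset.univ.filter fun x => Quotient.mk (genSetoid g) x = Q).card
      = Fintype.card (Quotient (genSetoid g)) * 2 := by
    rw [Finset.sum_congr rfl (fun Q _ => hfil Q), Finset.sum_const, smul_eq_mul,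
      Finset.card_univ, mul_comm]
  rw [Nat.card_eq_fintype_card]
  omega

end PairingAux

/-- if `θ` is the partition of `{1,…,k}` into `m` consecutive intervals
(encoded as the kernel of a monotone surjection `c : Fin k → Fin m`), `π ∈ P₂(k)`
satisfies `π ∨ θ = 1_k` and `π' ∈ P₂(k)` satisfies `π' ≤ θ`, then
`|π ∨ π'| ≤ k/2 − m + 1`. -/
theorem join_block_count_le {k m : ℕ} (hk : Even k)
    (c : Fin k → Fin m) (hc : Monotone c) (hcs : Function.Surjective c)
    (f g : Fin k → Fin k) (hf : IsPairing f) (hg : IsPairing g)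
    (hjoin : genSetoid f ⊔ Setoid.ker c = ⊤)
    (hg' : ∀ x, c (g x) = c x) :
    (((genSetoid f ⊔ genSetoid g).classes.ncard : ℤ))
      ≤ ((k / 2 : ℕ) : ℤ) - (m : ℤ) + 1 := by
  classical
  have hclasses : (genSetoid f ⊔ genSetoid g).classes.ncard
      = Nat.card (Quotient (genSetoid f ⊔ genSetoid g)) := by
    rw [← Nat.card_coe_set_eq]
    exact (Nat.card_congr (Setoid.quotientEquivClasses _)).symm
  rcases Nat.eq_zero_or_pos k with hk0 | hk0
  · subst hk0
    have hm0 : m = 0 := by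
      by_contra hm
      obtain ⟨x, -⟩ := hcs ⟨0, Nat.pos_of_ne_zero hm⟩
      exact x.elim0
    subst hm0
    rw [hclasses]
    have hzero : Nat.card (Quotient (genSetoid f ⊔ genSetoid g)) = 0 := by
      rw [Nat.card_eq_zero]
      left
      constructor
      intro q
      obtain ⟨x, -⟩ := q.exists_rep
      exact x.elim0
    rw [hzero]
    norm_num
  · have hut : genSetoid g ≤ Setoid.ker c := sInf_le fun x => Setoid.ker_def.mpr (hg' x)
    have hB := card_quot_add_card_quot_le (genSetoid f ⊔ genSetoid g) (Setoid.ker c)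
      (genSetoid g) le_sup_right hut
    have htop : (genSetoid f ⊔ genSetoid g) ⊔ Setoid.ker c = ⊤ := by
      rw [sup_assoc, sup_eq_right.mpr hut, hjoin]
    have h1 : Nat.card (Quotient ((genSetoid f ⊔ genSetoid g) ⊔ Setoid.ker c)) = 1 := by
      rw [htop]
      have hsub : Subsingleton (Quotient (⊤ : Setoid (Fin k))) := by
        constructor
        intro a b
        obtain ⟨x, rfl⟩ := a.exists_rep
        obtain ⟨y, rfl⟩ := b.exists_rep
        exact Quotient.sound trivial
      have hne : Nonempty (Quotient (⊤ : Setoid (Fin k))) :=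
        ⟨Quotient.mk _ ⟨0, hk0⟩⟩
      exact Nat.card_eq_one_iff_unique.mpr ⟨hsub, hne⟩
    have hm : Nat.card (Quotient (Setoid.ker c)) = m := by
      rw [Nat.card_congr (Setoid.quotientKerEquivOfSurjective c hcs),
        Nat.card_eq_fintype_card, Fintype.card_fin]
    have hu := two_mul_card_quot_genSetoid hg
    rw [h1, hm] at hB
    rw [hclasses]
    omega
end

section
/- Let k ≥ 2 be even and let θ = {T_1,…,T_m} be the partition of {1,…,k} into m consecutive intervals of sizes k_1,…,k_m with k = k_1+⋯+k_m. Let π ∈ P_2(k) satisfy π ∨ θ = 1_k, let π' ∈ P_2(k) satisfy π' ≤ θ, and assume |π ∨ π'| = k/2 − m + 1. If moreover every block of π meets two distinct intervals of θ (i.e., no block of π is contained in a single T_i), then there exists an index i such that the interval T_i has exactly two elements. -/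
open Matrix

/-- A finset invariant under a fixed-point-free involution has even cardinality. -/
lemma even_card_of_free_involution {α : Type*} [DecidableEq α] (g : α → α)
    (hinv : ∀ a, g (g a) = a) (hne : ∀ a, g a ≠ a) :
    ∀ s : Finset α, (∀ a ∈ s, g a ∈ s) → Even s.card := by
  intro s
  induction s using Finset.strongInduction with
  | _ s ih =>
    intro hmem
    rcases s.eq_empty_or_nonempty with rfl | ⟨a, ha⟩
    · simp
    · have hga : g a ∈ s := hmem a ha
      have hpair : ({a, g a} : Finset α) ⊆ s := by
        intro b hb
        rcases Finset.mem_insert.mp hb with rfl | hb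
        · exact ha
        · rcases Finset.mem_singleton.mp hb with rfl
          exact hga
      have hss : s \ {a, g a} ⊂ s := by
        apply Finset.sdiff_ssubset hpair ⟨a, Finset.mem_insert_self _ _⟩
      have hts : ∀ b ∈ s \ {a, g a}, g b ∈ s \ {a, g a} := by
        intro b hb
        rcases Finset.mem_sdiff.mp hb with ⟨hbs, hbp⟩
        simp only [Finset.mem_insert, Finset.mem_singleton, not_or] at hbp
        refine Finset.mem_sdiff.mpr ⟨hmem b hbs, ?_⟩
        simp only [Finset.mem_insert, Finset.mem_singleton, not_or]
        constructor
        · intro h; exact hbp.2 (by rw [← h, hinv])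
        · intro h; exact hbp.1 (by
            have := congrArg g h; rwa [hinv, hinv] at this)
      have hev := ih _ hss hts
      have hcard : s.card = (s \ {a, g a}).card + 2 := by
        rw [Finset.card_sdiff_of_subset hpair, Finset.card_pair (Ne.symm (hne a))]
        have : 2 ≤ s.card := by
          calc 2 = ({a, g a} : Finset α).card := (Finset.card_pair (Ne.symm (hne a))).symm
          _ ≤ s.card := Finset.card_le_card hpair
        omega
      rw [hcard]
      exact hev.add (Even.add_self 1)

/-- with `θ` the partition of `{1,…,k}` into `m` consecutive intervals
(encoded as the kernel of a monotone surjection `c : Fin k → Fin m`), `π ∈ P₂(k)` with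
`π ∨ θ = 1_k`, `π' ∈ P₂(k)` with `π' ≤ θ` and `|π ∨ π'| = k/2 − m + 1`: if no block of
`π` is contained in a single interval of `θ`, then some interval `T_i` has exactly two
elements. -/
theorem exists_interval_of_size_two {k m : ℕ} (hk2 : 2 ≤ k) (hk : Even k)
    (c : Fin k → Fin m) (hc : Monotone c) (hcs : Function.Surjective c)
    (f g : Fin k → Fin k) (hf : IsPairing f) (hg : IsPairing g)
    (hjoin : genSetoid f ⊔ Setoid.ker c = ⊤)
    (hg' : ∀ x, c (g x) = c x)
    (hmax : (((genSetoid f ⊔ genSetoid g).classes.ncard : ℤ))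
      = ((k / 2 : ℕ) : ℤ) - (m : ℤ) + 1)
    (hcross : ∀ x, c (f x) ≠ c x) :
    ∃ i : Fin m, (Finset.univ.filter (fun x : Fin k => c x = i)).card = 2 := by
  classical
  by_contra hno
  push_neg at hno
  set S := genSetoid f ⊔ genSetoid g with hSdef
  haveI : Fintype (Quotient S) := Fintype.ofFinite _
  have hfS : ∀ x, S (f x) x := fun x =>
    (le_sup_left : genSetoid f ≤ S) (fun r hr => hr x)
  have hgS : ∀ x, S (g x) x := fun x =>
    (le_sup_right : genSetoid g ≤ S) (fun r hr => hr x)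
  set C := Fintype.card (Quotient S) with hCdef
  have hC : S.classes.ncard = C := by
    rw [← Nat.card_coe_set_eq]
    rw [Nat.card_congr (Setoid.quotientEquivClasses S).symm, Nat.card_eq_fintype_card]
  -- the incidence set
  set φ : Fin k → Quotient S × Fin m := fun x => (Quotient.mk S x, c x) with hφdef
  set I : Finset (Quotient S × Fin m) := Finset.univ.image φ with hIdef
  -- bound 1 : 2 * C ≤ I.card
  have hb1 : 2 * C ≤ I.card := by
    have hfib : I.card = ∑ q : Quotient S, (I.filter fun p => p.1 = q).card :=
      Finset.card_eq_sum_card_fiberwise (fun p _ => Finset.mem_univ p.1)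
    have hlower : ∀ q : Quotient S, 2 ≤ (I.filter fun p => p.1 = q).card := by
      intro q
      obtain ⟨x, hx⟩ := Quotient.exists_rep q
      have h1 : φ x ∈ I.filter fun p => p.1 = q := by
        refine Finset.mem_filter.mpr ⟨Finset.mem_image_of_mem φ (Finset.mem_univ x), hx⟩
      have h2 : φ (f x) ∈ I.filter fun p => p.1 = q := by
        refine Finset.mem_filter.mpr ⟨Finset.mem_image_of_mem φ (Finset.mem_univ (f x)), ?_⟩
        show Quotient.mk S (f x) = q
        rw [← hx]
        exact Quotient.sound (hfS x)
      have hne : φ x ≠ φ (f x) := by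
        intro h
        exact hcross x (congrArg Prod.snd h).symm
      calc 2 = ({φ x, φ (f x)} : Finset _).card := (Finset.card_pair hne).symm
      _ ≤ _ := Finset.card_le_card (by
          intro p hp
          rcases Finset.mem_insert.mp hp with rfl | hp
          · exact h1
          · rcases Finset.mem_singleton.mp hp with rfl; exact h2)
    calc 2 * C = ∑ _q : Quotient S, 2 := by
            rw [Finset.sum_const, Finset.card_univ, smul_eq_mul, mul_comm]
    _ ≤ ∑ q : Quotient S, (I.filter fun p => p.1 = q).card :=
          Finset.sum_le_sum fun q _ => hlower q
    _ = I.card := hfib.symm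
  -- bound 2 : 2 * I.card ≤ k
  have hb2 : 2 * I.card ≤ k := by
    have hfib : (Finset.univ : Finset (Fin k)).card
        = ∑ p ∈ I, (Finset.univ.filter fun x => φ x = p).card :=
      Finset.card_eq_sum_card_fiberwise
        (fun x _ => Finset.mem_image_of_mem φ (Finset.mem_univ x))
    have hlower : ∀ p ∈ I, 2 ≤ (Finset.univ.filter fun x => φ x = p).card := by
      intro p hp
      obtain ⟨x, -, hx⟩ := Finset.mem_image.mp hp
      have h1 : x ∈ Finset.univ.filter fun y => φ y = p :=
        Finset.mem_filter.mpr ⟨Finset.mem_univ x, hx⟩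
      have h2 : g x ∈ Finset.univ.filter fun y => φ y = p := by
        refine Finset.mem_filter.mpr ⟨Finset.mem_univ (g x), ?_⟩
        rw [← hx]
        show (Quotient.mk S (g x), c (g x)) = (Quotient.mk S x, c x)
        rw [hg' x, Quotient.sound (hgS x)]
      have hne : x ≠ g x := (hg.2 x).symm
      calc 2 = ({x, g x} : Finset _).card := (Finset.card_pair hne).symm
      _ ≤ _ := Finset.card_le_card (by
          intro y hy
          rcases Finset.mem_insert.mp hy with rfl | hy
          · exact h1
          · rcases Finset.mem_singleton.mp hy with rfl; exact h2)
    calc 2 * I.card = ∑ _p ∈ I, 2 := by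
            rw [Finset.sum_const, smul_eq_mul, mul_comm]
    _ ≤ ∑ p ∈ I, (Finset.univ.filter fun x => φ x = p).card :=
          Finset.sum_le_sum hlower
    _ = (Finset.univ : Finset (Fin k)).card := hfib.symm
    _ = k := by simp
  -- every interval has cardinality ≥ 4
  have hint : ∀ i : Fin m, 4 ≤ (Finset.univ.filter fun x : Fin k => c x = i).card := by
    intro i
    set T := Finset.univ.filter fun x : Fin k => c x = i with hT
    have hTne : T.Nonempty := by
      obtain ⟨x, hx⟩ := hcs i
      exact ⟨x, Finset.mem_filter.mpr ⟨Finset.mem_univ x, hx⟩⟩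
    have hTev : Even T.card := by
      apply even_card_of_free_involution g hg.1 hg.2
      intro a ha
      rcases Finset.mem_filter.mp ha with ⟨-, ha2⟩
      exact Finset.mem_filter.mpr ⟨Finset.mem_univ _, by rw [hg' a]; exact ha2⟩
    have hT2 : T.card ≠ 2 := hno i
    have hT1 : 1 ≤ T.card := Finset.card_pos.mpr hTne
    obtain ⟨r, hr⟩ := hTev
    omega
  -- summing the interval sizes
  have hsum : 4 * m ≤ k := by
    have hfib : (Finset.univ : Finset (Fin k)).card
        = ∑ i : Fin m, (Finset.univ.filter fun x : Fin k => c x = i).card :=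
      Finset.card_eq_sum_card_fiberwise (fun x _ => Finset.mem_univ (c x))
    calc 4 * m = ∑ _i : Fin m, 4 := by
            rw [Finset.sum_const, Finset.card_univ, smul_eq_mul, mul_comm, Fintype.card_fin]
    _ ≤ ∑ i : Fin m, (Finset.univ.filter fun x : Fin k => c x = i).card :=
          Finset.sum_le_sum fun i _ => hint i
    _ = (Finset.univ : Finset (Fin k)).card := hfib.symm
    _ = k := by simp
  -- arithmetic contradiction
  have h4C : 4 * C ≤ k := by omega
  rw [hC] at hmax
  obtain ⟨r, hr⟩ := hk
  have hhalf : k / 2 = r := by omega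
  rw [hhalf] at hmax
  omega
end
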